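/- arXiv:1711.08625 — 2 statements merged into one kernel-verified Lean document; each statement's English description precedes it below -/
import Mathlib

section
/- Let p be an odd prime, M = Qd(p), and P = V⟨α⟩ its Sylow p-subgroup as below. If Q is a subgroup of V of order p that is fully F_P(M)-normalized, then Q = Z(P), the center of P (which is the subgroup of V generated by ((1,0), I)). -/
/-- `SL(2, p)`. -/
abbrev SL2 (p : ℕ) := Matrix.SpecialLinearGroup (Fin 2) (ZMod p)

/-- The additive automorphism of `ℤ/p × ℤ/p` (as `Fin 2 → ZMod p`) given by a
matrix in `SL(2, p)` acting by matrix–vector multiplication. -/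
def sl2AddAut (p : ℕ) (A : SL2 p) : AddAut (Fin 2 → ZMod p) where
  toFun v := (A : Matrix (Fin 2) (Fin 2) (ZMod p)).mulVec v
  invFun v := ((A⁻¹ : SL2 p) : Matrix (Fin 2) (Fin 2) (ZMod p)).mulVec v
  left_inv v := by
    show (_ : Matrix (Fin 2) (Fin 2) (ZMod p)).mulVec (Matrix.mulVec _ v) = v
    rw [Matrix.mulVec_mulVec, ← Matrix.SpecialLinearGroup.coe_mul, inv_mul_cancel,
      Matrix.SpecialLinearGroup.coe_one, Matrix.one_mulVec]
  right_inv v := by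
    show (_ : Matrix (Fin 2) (Fin 2) (ZMod p)).mulVec (Matrix.mulVec _ v) = v
    rw [Matrix.mulVec_mulVec, ← Matrix.SpecialLinearGroup.coe_mul, mul_inv_cancel,
      Matrix.SpecialLinearGroup.coe_one, Matrix.one_mulVec]
  map_add' v w := Matrix.mulVec_add _ v w

/-- The action of `SL(2, p)` on `ℤ/p × ℤ/p` as a homomorphism into the
(multiplicatively written) automorphism group. -/
def sl2Phi (p : ℕ) : SL2 p →* MulAut (Multiplicative (Fin 2 → ZMod p)) where
  toFun A := AddEquiv.toMultiplicative (sl2AddAut p A)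
  map_one' := by
    ext v
    simp [sl2AddAut]
  map_mul' A B := by
    ext v
    simp [sl2AddAut, ← Matrix.mulVec_mulVec]

/-- The quadratic group `Qd(p) = (ℤ/p × ℤ/p) ⋊ SL(2, p)`. -/
abbrev Qd (p : ℕ) := SemidirectProduct (Multiplicative (Fin 2 → ZMod p)) (SL2 p) (sl2Phi p)

/-- The normal subgroup `V = ℤ/p × ℤ/p` of `Qd(p)`. -/
def QdV (p : ℕ) : Subgroup (Qd p) :=
  (SemidirectProduct.inl : Multiplicative (Fin 2 → ZMod p) →* Qd p).range

/-- The unipotent matrix `α = [[1,1],[0,1]] ∈ SL(2,p)`. -/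
def alphaSL (p : ℕ) : SL2 p :=
  ⟨!![1, 1; 0, 1], by simp [Matrix.det_fin_two_of]⟩

/-- The element `α` of `Qd(p)`. -/
def Qdalpha (p : ℕ) : Qd p := SemidirectProduct.inr (alphaSL p)

/-- The Sylow `p`-subgroup `P = V⟨α⟩` of `Qd(p)`. -/
def QdP (p : ℕ) : Subgroup (Qd p) := QdV p ⊔ Subgroup.zpowers (Qdalpha p)

/-- The central element `t = ((1,0), I)` of `P`. -/
def Qdt (p : ℕ) : Qd p := SemidirectProduct.inl (Multiplicative.ofAdd ![1, 0])

/-- `Q ≤ P` is fully `F_P(M)`-normalized: `|N_P(mQm⁻¹)| ≤ |N_P(Q)|` for every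
`m ∈ M` with `mQm⁻¹ ≤ P`. -/
def IsFullyNormalized {M : Type*} [Group M] (P Q : Subgroup M) : Prop :=
  ∀ m : M, Subgroup.map (MulAut.conj m).toMonoidHom Q ≤ P →
    Nat.card ↥(P ⊓ Subgroup.normalizer ((Subgroup.map (MulAut.conj m).toMonoidHom Q : Set M))) ≤
      Nat.card ↥(P ⊓ Subgroup.normalizer (Q : Set M))

open SemidirectProduct Subgroup Multiplicative

section Aux

variable (p : ℕ)

instance [NeZero p] : Finite (Qd p) :=
  Finite.of_injective (fun x : Qd p => (x.left, x.right))
    (fun a b h => SemidirectProduct.ext (Prod.mk.injEq .. ▸ h).1 (Prod.mk.injEq .. ▸ h).2)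

/-- The matrices `[[1,n],[0,1]]`. -/
def betaSL (n : ZMod p) : SL2 p :=
  ⟨!![1, n; 0, 1], by simp [Matrix.det_fin_two_of]⟩

lemma betaSL_mul (a b : ZMod p) : betaSL p a * betaSL p b = betaSL p (a + b) := by
  apply Subtype.ext
  show (!![1, a; 0, 1] : Matrix (Fin 2) (Fin 2) (ZMod p)) * !![1, b; 0, 1] = _
  rw [Matrix.mul_fin_two]
  simp [betaSL, add_comm]

lemma betaSL_zero : betaSL p 0 = 1 := by
  apply Subtype.ext
  show (!![1, 0; 0, 1] : Matrix (Fin 2) (Fin 2) (ZMod p)) = 1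
  simp [← Matrix.one_fin_two]

lemma betaSL_inv (a : ZMod p) : (betaSL p a)⁻¹ = betaSL p (-a) := by
  apply inv_eq_of_mul_eq_one_right
  rw [betaSL_mul, add_neg_cancel, betaSL_zero]

lemma alphaSL_eq : alphaSL p = betaSL p 1 := rfl

lemma alphaSL_zpow (n : ℤ) : alphaSL p ^ n = betaSL p n := by
  induction n using Int.induction_on with
  | zero => rw [zpow_zero, Int.cast_zero, betaSL_zero]
  | succ n ih => rw [zpow_add_one, ih, alphaSL_eq, betaSL_mul]; norm_num
  | pred n ih => rw [zpow_sub_one, ih, alphaSL_eq, betaSL_inv, betaSL_mul]; congr 1; push_cast; ring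

lemma betaSL_mulVec (a : ZMod p) (v : Fin 2 → ZMod p) :
    ((betaSL p a : SL2 p) : Matrix (Fin 2) (Fin 2) (ZMod p)).mulVec v = ![v 0 + a * v 1, v 1] := by
  funext i
  fin_cases i <;>
    simp [betaSL, Matrix.mulVec, dotProduct, Fin.sum_univ_two]

lemma mem_QdV_iff (x : Qd p) : x ∈ QdV p ↔ x.right = 1 := by
  rw [QdV, range_inl_eq_ker_rightHom, MonoidHom.mem_ker, rightHom_eq_right]

lemma mem_QdP_iff (x : Qd p) : x ∈ QdP p ↔ ∃ n : ℤ, x.right = alphaSL p ^ n := by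
  constructor
  · intro hx
    have : QdP p ≤ (Subgroup.zpowers (alphaSL p)).comap (rightHom : Qd p →* SL2 p) := by
      rw [QdP]
      refine sup_le ?_ ?_
      · intro y hy
        rw [mem_QdV_iff] at hy
        simp only [Subgroup.mem_comap, rightHom_eq_right, hy]
        exact one_mem _
      · rintro y ⟨n, rfl⟩
        simp only [Subgroup.mem_comap, map_zpow, Qdalpha, rightHom_inr]
        exact zpow_mem (mem_zpowers _) n
    obtain ⟨n, hn⟩ := this hx
    have hn' : alphaSL p ^ n = rightHom x := hn
    exact ⟨n, hn'.symm⟩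
  · rintro ⟨n, hn⟩
    have h1 : SemidirectProduct.inl x.left ∈ QdP p :=
      le_sup_left (a := QdV p) ⟨x.left, rfl⟩
    have h2 : SemidirectProduct.inr x.right ∈ QdP p := by
      rw [hn]
      have : SemidirectProduct.inr (alphaSL p ^ n) = Qdalpha p ^ n := by
        simp [Qdalpha]
      rw [this]
      exact le_sup_right (a := QdV p) (zpow_mem (mem_zpowers _) n)
    rw [← inl_left_mul_inr_right x]
    exact mul_mem h1 h2

lemma sl2Phi_apply (A : SL2 p) (w : Fin 2 → ZMod p) :
    sl2Phi p A (ofAdd w) = ofAdd ((A : Matrix (Fin 2) (Fin 2) (ZMod p)).mulVec w) := rfl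

lemma conj_inl (x : Qd p) (u : Multiplicative (Fin 2 → ZMod p)) :
    x * SemidirectProduct.inl u * x⁻¹ = SemidirectProduct.inl (sl2Phi p x.right u) := by
  conv_lhs => rw [← inl_left_mul_inr_right x]
  rw [mul_inv_rev]
  have h : (SemidirectProduct.inr x.right : Qd p) * SemidirectProduct.inl u *
      (SemidirectProduct.inr x.right : Qd p)⁻¹ = SemidirectProduct.inl (sl2Phi p x.right u) := by
    rw [← map_inv, ← inl_aut]
  have h1 : (SemidirectProduct.inl x.left : Qd p) * SemidirectProduct.inr x.right *
        SemidirectProduct.inl u *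
        ((SemidirectProduct.inr x.right : Qd p)⁻¹ * (SemidirectProduct.inl x.left : Qd p)⁻¹)
      = SemidirectProduct.inl x.left * ((SemidirectProduct.inr x.right : Qd p) *
          SemidirectProduct.inl u * (SemidirectProduct.inr x.right : Qd p)⁻¹) *
          (SemidirectProduct.inl x.left : Qd p)⁻¹ := by group
  rw [h1, h, ← map_inv, ← map_mul, ← map_mul,
    mul_comm x.left, mul_assoc, mul_inv_cancel, mul_one]

lemma mem_zpowers_inl_iff [NeZero p] (w : Fin 2 → ZMod p) (x : Qd p) :
    x ∈ Subgroup.zpowers (SemidirectProduct.inl (ofAdd w)) ↔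
      ∃ c : ZMod p, x = SemidirectProduct.inl (ofAdd (c • w)) := by
  constructor
  · rintro ⟨n, rfl⟩
    refine ⟨(n : ZMod p), ?_⟩
    show SemidirectProduct.inl (ofAdd w) ^ n = _
    rw [← map_zpow, ← ofAdd_zsmul, Int.cast_smul_eq_zsmul]
  · rintro ⟨c, rfl⟩
    refine ⟨(c.val : ℤ), ?_⟩
    show SemidirectProduct.inl (ofAdd w) ^ (c.val : ℤ) = _
    have hcv : ((c.val : ℤ)) • w = c • w := by
      rw [← Int.cast_smul_eq_zsmul (ZMod p)]
      norm_num [ZMod.natCast_val, ZMod.cast_id]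
    rw [← map_zpow, ← ofAdd_zsmul, hcv]

lemma conj_Qdt (x : Qd p) (hx : x ∈ QdP p) : x * Qdt p * x⁻¹ = Qdt p := by
  obtain ⟨n, hn⟩ := (mem_QdP_iff p x).mp hx
  rw [Qdt, conj_inl, hn, alphaSL_zpow, sl2Phi_apply, betaSL_mulVec]
  have h2 : (![(![1, 0] : Fin 2 → ZMod p) 0 + (n : ZMod p) * ![1, 0] 1, ![1, 0] 1]) =
      ![(1 : ZMod p), 0] := by
    funext i
    fin_cases i <;> simp
  rw [h2]

lemma conj_Qdt_zpow (x : Qd p) (hx : x ∈ QdP p) (n : ℤ) :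
    x * Qdt p ^ n * x⁻¹ = Qdt p ^ n := by
  rw [conj_zpow.symm, conj_Qdt p x hx]

lemma QdP_le_normalizer_t : QdP p ≤ Subgroup.normalizer ((Subgroup.zpowers (Qdt p) : Set (Qd p))) := by
  intro x hx
  rw [Subgroup.mem_normalizer_iff]
  intro h
  constructor
  · rintro ⟨n, rfl⟩
    exact ⟨n, (conj_Qdt_zpow p x hx n).symm⟩
  · rintro ⟨n, hn⟩
    have hn' : Qdt p ^ n = x * h * x⁻¹ := hn
    have h2 := conj_Qdt_zpow p x⁻¹ (inv_mem hx) n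
    rw [inv_inv] at h2
    have h3 : h = x⁻¹ * (x * h * x⁻¹) * x := by group
    rw [h3, ← hn', h2]
    exact zpow_mem (mem_zpowers _) n

lemma Qdt_mem_QdV : Qdt p ∈ QdV p := ⟨_, rfl⟩

lemma zpowers_t_le_QdP : Subgroup.zpowers (Qdt p) ≤ QdP p := by
  rw [Subgroup.zpowers_le]
  exact le_sup_left (a := QdV p) (Qdt_mem_QdV p)

lemma alphaSL_ne_one [Fact p.Prime] : alphaSL p ≠ 1 := by
  intro h
  have := congrArg (fun A : SL2 p => (A : Matrix (Fin 2) (Fin 2) (ZMod p)) 0 1) h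
  simp [alphaSL] at this

/-- The center of `P` is generated by `t`. -/
lemma center_eq [Fact p.Prime] :
    Subgroup.map (QdP p).subtype (Subgroup.center ↥(QdP p)) = Subgroup.zpowers (Qdt p) := by
  apply le_antisymm
  · rintro _ ⟨⟨x, hxP⟩, hxc, rfl⟩
    rw [SetLike.mem_coe, Subgroup.mem_center_iff] at hxc
    show x ∈ Subgroup.zpowers (Qdt p)
    -- x commutes with everything in P
    have hcomm : ∀ y : Qd p, y ∈ QdP p → y * x * y⁻¹ = x := by
      intro y hy
      have := hxc ⟨y, hy⟩
      have : y * x = x * y := congrArg Subtype.val this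
      rw [this]; group
    obtain ⟨n, hn⟩ := (mem_QdP_iff p x).mp hxP
    have he : SemidirectProduct.inl (ofAdd ![(0 : ZMod p), 1]) ∈ QdP p :=
      le_sup_left (a := QdV p) ⟨_, rfl⟩
    have h1 : x * SemidirectProduct.inl (ofAdd ![(0 : ZMod p), 1]) * x⁻¹ =
        SemidirectProduct.inl (ofAdd ![(0 : ZMod p), 1]) := by
      have := hxc ⟨_, he⟩
      have h' : SemidirectProduct.inl (ofAdd ![(0 : ZMod p), 1]) * x =
          x * SemidirectProduct.inl (ofAdd ![(0 : ZMod p), 1]) := congrArg Subtype.val this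
      rw [← h']; group
    rw [conj_inl, hn, alphaSL_zpow, sl2Phi_apply, betaSL_mulVec] at h1
    have h2 : (![(0 : ZMod p) + (n : ZMod p) * 1, 1] : Fin 2 → ZMod p) = ![0, 1] := by
      have := SemidirectProduct.inl_injective (ofAdd.injective.eq_iff.mpr rfl ▸ h1)
      exact ofAdd.injective this
    have h3 : (n : ZMod p) = 0 := by
      have := congrFun h2 0
      simpa using this
    have hx1 : x.right = 1 := by
      rw [hn, alphaSL_zpow]
      rw [show ((n : ℤ) : ZMod p) = 0 from h3]
      exact betaSL_zero p
    -- so x = inl w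
    have hxl : x = SemidirectProduct.inl x.left := by
      conv_lhs => rw [← inl_left_mul_inr_right x]
      rw [hx1, map_one, mul_one]
    -- commuting with α forces w 1 = 0
    have ha : Qdalpha p ∈ QdP p := le_sup_right (a := QdV p) (mem_zpowers _)
    have h4 : Qdalpha p * x * (Qdalpha p)⁻¹ = x := hcomm _ ha
    set w : Fin 2 → ZMod p := x.left.toAdd with hw
    have hxw : x = SemidirectProduct.inl (ofAdd w) := by rw [hxl]; rfl
    rw [hxw] at h4
    rw [conj_inl] at h4
    have har : (Qdalpha p).right = alphaSL p := rfl
    rw [har, alphaSL_eq, sl2Phi_apply, betaSL_mulVec] at h4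
    have h6 : (![w 0 + 1 * w 1, w 1] : Fin 2 → ZMod p) = w :=
      ofAdd.injective (SemidirectProduct.inl_injective h4)
    have h7 : w 1 = 0 := by
      have h8 := congrFun h6 0
      simp only [Matrix.cons_val_zero, one_mul] at h8
      linear_combination h8
    have hc : w = (w 0) • ![1, 0] := by
      funext i
      fin_cases i <;> simp [h7]
    show x ∈ Subgroup.zpowers (Qdt p)
    rw [hxw, hc]
    exact (mem_zpowers_inl_iff p ![1, 0] _).mpr ⟨w 0, by rw [← hc, hc]⟩
  · rw [Subgroup.zpowers_le]
    have htP : Qdt p ∈ QdP p := zpowers_t_le_QdP p (mem_zpowers _)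
    refine ⟨⟨Qdt p, htP⟩, ?_, rfl⟩
    rw [SetLike.mem_coe, Subgroup.mem_center_iff]
    rintro ⟨y, hy⟩
    apply Subtype.ext
    show y * Qdt p = Qdt p * y
    have := conj_Qdt p y hy
    calc y * Qdt p = (y * Qdt p * y⁻¹) * y := by group
      _ = Qdt p * y := by rw [this]

end Aux

theorem statement14 (p : ℕ) [Fact p.Prime] (hodd : Odd p)
    (Q : Subgroup (Qd p)) (hQV : Q ≤ QdV p) (hQcard : Nat.card Q = p)
    (hfn : IsFullyNormalized (QdP p) Q) :
    Q = Subgroup.zpowers (Qdt p) ∧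
      Subgroup.map (QdP p).subtype (Subgroup.center ↥(QdP p)) = Subgroup.zpowers (Qdt p) := by
  have hp1 : p.Prime := Fact.out
  refine ⟨?_, center_eq p⟩
  haveI : IsCyclic ↥Q := isCyclic_of_prime_card hQcard
  obtain ⟨⟨g, hgQ⟩, hgen⟩ := IsCyclic.exists_generator (α := ↥Q)
  have hQ : Q = Subgroup.zpowers g := by
    apply le_antisymm
    · intro x hx
      obtain ⟨n, hn⟩ := hgen ⟨x, hx⟩
      exact ⟨n, congrArg Subtype.val hn⟩
    · exact Subgroup.zpowers_le.mpr hgQ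
  obtain ⟨l, hl⟩ := hQV hgQ
  set v : Fin 2 → ZMod p := l.toAdd with hv
  have hg : g = SemidirectProduct.inl (ofAdd v) := by rw [← hl]; rfl
  have hgne : g ≠ 1 := by
    rintro rfl
    rw [hQ, Subgroup.zpowers_one_eq_bot] at hQcard
    simp at hQcard
    exact hp1.one_lt.ne' hQcard.symm
  have hvne : v ≠ 0 := by
    intro h
    apply hgne
    rw [hg, h]
    simp
  by_cases hv1 : v 1 = 0
  · -- `Q = zpowers t`
    have hv0 : v 0 ≠ 0 := by
      intro h0
      apply hvne
      funext i
      fin_cases i <;> simp [h0, hv1]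
    rw [hQ, hg]
    apply le_antisymm
    · intro x hx
      obtain ⟨c, rfl⟩ := (mem_zpowers_inl_iff p v x).mp hx
      refine (mem_zpowers_inl_iff p ![1, 0] _).mpr ⟨c * v 0, ?_⟩
      have : c • v = (c * v 0) • ![(1 : ZMod p), 0] := by
        funext i
        fin_cases i <;> simp [hv1]
      rw [this]
    · intro x hx
      obtain ⟨c, rfl⟩ := (mem_zpowers_inl_iff p ![1, 0] x).mp hx
      refine (mem_zpowers_inl_iff p v _).mpr ⟨c * (v 0)⁻¹, ?_⟩
      have : c • (![(1 : ZMod p), 0]) = (c * (v 0)⁻¹) • v := by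
        funext i
        fin_cases i <;> simp [hv1]
        rw [mul_assoc, inv_mul_cancel₀ hv0, mul_one]
      rw [this]
  · exfalso
    have hdet : (!![0, (v 1)⁻¹; -(v 1), v 0] : Matrix (Fin 2) (Fin 2) (ZMod p)).det = 1 := by
      rw [Matrix.det_fin_two_of, mul_neg, sub_neg_eq_add, zero_mul, zero_add,
        inv_mul_cancel₀ hv1]
    set B : SL2 p := ⟨_, hdet⟩ with hB
    set m : Qd p := SemidirectProduct.inr B with hm
    have hBv : (B : Matrix (Fin 2) (Fin 2) (ZMod p)).mulVec v = ![1, 0] := by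
      funext i
      fin_cases i
      · show Matrix.mulVec !![0, (v 1)⁻¹; -(v 1), v 0] v 0 = 1
        simp [Matrix.mulVec, dotProduct, Fin.sum_univ_two, inv_mul_cancel₀ hv1]
      · show Matrix.mulVec !![0, (v 1)⁻¹; -(v 1), v 0] v 1 = 0
        simp [Matrix.mulVec, dotProduct, Fin.sum_univ_two]
        ring
    have hmQ : Subgroup.map (MulAut.conj m).toMonoidHom Q = Subgroup.zpowers (Qdt p) := by
      rw [hQ, MonoidHom.map_zpowers]
      congr 1
      show m * g * m⁻¹ = Qdt p
      rw [hg, conj_inl]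
      have hmr : m.right = B := rfl
      rw [hmr, sl2Phi_apply, hBv]
      rfl
    have hle : Subgroup.map (MulAut.conj m).toMonoidHom Q ≤ QdP p := by
      rw [hmQ]
      exact zpowers_t_le_QdP p
    have hcard := hfn m hle
    rw [hmQ] at hcard
    have h1 : QdP p ⊓ Subgroup.normalizer ((Subgroup.zpowers (Qdt p) : Set (Qd p))) = QdP p :=
      inf_eq_left.mpr (QdP_le_normalizer_t p)
    have h2 : QdP p ⊓ Subgroup.normalizer (Q : Set (Qd p)) = QdV p := by
      apply le_antisymm
      · rintro x ⟨hxP, hxN⟩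
        rw [mem_QdV_iff]
        obtain ⟨n, hn⟩ := (mem_QdP_iff p x).mp hxP
        have hgQ' : x * g * x⁻¹ ∈ Q := (Subgroup.mem_normalizer_iff.mp hxN g).mp hgQ
        rw [hg, conj_inl, hn, alphaSL_zpow, sl2Phi_apply, betaSL_mulVec, hQ, hg] at hgQ'
        obtain ⟨c, hc⟩ := (mem_zpowers_inl_iff p v _).mp hgQ'
        have hc' : (![v 0 + (n : ZMod p) * v 1, v 1] : Fin 2 → ZMod p) = c • v :=
          ofAdd.injective (SemidirectProduct.inl_injective hc)
        have e1 : v 1 = c * v 1 := by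
          have h8 := congrFun hc' 1
          simpa using h8
        have hcone : c = 1 := by
          by_contra hc1
          have h9 : (c - 1) * v 1 = 0 := by linear_combination -e1
          rcases mul_eq_zero.mp h9 with h | h
          · exact hc1 (by linear_combination h)
          · exact hv1 h
        have e0 : v 0 + (n : ZMod p) * v 1 = c * v 0 := by
          have h8 := congrFun hc' 0
          simpa using h8
        rw [hcone, one_mul] at e0
        have hn0 : ((n : ℤ) : ZMod p) = 0 := by
          have h9 : (n : ZMod p) * v 1 = 0 := by linear_combination e0
          exact (mul_eq_zero.mp h9).resolve_right hv1
        rw [hn, alphaSL_zpow, hn0, betaSL_zero]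
      · intro x hx
        obtain ⟨u, rfl⟩ := hx
        refine Subgroup.mem_inf.mpr ⟨le_sup_left (a := QdV p) ⟨u, rfl⟩, ?_⟩
        rw [Subgroup.mem_normalizer_iff]
        intro h
        constructor
        · intro hh
          obtain ⟨z, hz⟩ := hQV hh
          have key : (SemidirectProduct.inl u : Qd p) * SemidirectProduct.inl z *
              (SemidirectProduct.inl u : Qd p)⁻¹ = SemidirectProduct.inl z := by
            rw [← map_inv, ← map_mul, ← map_mul, mul_comm u z, mul_assoc,
              mul_inv_cancel, mul_one]
          rw [← hz, key, hz]
          exact hh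
        · intro hh
          obtain ⟨z, hz⟩ := hQV hh
          have key : (SemidirectProduct.inl u : Qd p)⁻¹ * SemidirectProduct.inl z *
              (SemidirectProduct.inl u : Qd p) = SemidirectProduct.inl z := by
            rw [← map_inv, ← map_mul, ← map_mul, mul_comm u⁻¹ z, mul_assoc,
              inv_mul_cancel, mul_one]
          have h' : h = (SemidirectProduct.inl u : Qd p)⁻¹ *
              (SemidirectProduct.inl u * h * (SemidirectProduct.inl u : Qd p)⁻¹) *
              SemidirectProduct.inl u := by group
          rw [h', ← hz, key, hz]
          exact hh
    rw [h1, h2] at hcard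
    have heq : QdV p = QdP p :=
      Subgroup.eq_of_le_of_card_ge (le_sup_left (b := Subgroup.zpowers (Qdalpha p))) hcard
    have ha : Qdalpha p ∈ QdV p := heq ▸ (le_sup_right (a := QdV p) (Subgroup.mem_zpowers _))
    rw [mem_QdV_iff] at ha
    exact alphaSL_ne_one p ha
end

section
/- Let n ≥ 3 be an integer and M a finite group of order 3·2^n such that every normal subgroup of M of odd order is trivial and a Sylow 2-subgroup P of M is not normal in M. Let G = Park(M,P) be Park's group and ι : M → G Park's embedding. If Q is a subgroup of P contained in the normal core of P in M and the centralizer C_M(Q) is a 2-group, then the centralizer C_G(ι(Q)) is a 2-group. -/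
/-- Park's group `Park(M, P)`: the group of bijections of `M` commuting with the
right multiplication action of `P`. -/
def parkGroup (M : Type*) [Group M] (P : Subgroup M) : Subgroup (Equiv.Perm M) where
  carrier := {f : Equiv.Perm M | ∀ (m u : M), u ∈ P → f (m * u) = f m * u}
  one_mem' := by intro m u _; rfl
  mul_mem' := by
    intro f g hf hg m u hu
    simp only [Equiv.Perm.mul_apply]
    rw [hg m u hu, hf _ u hu]
  inv_mem' := by
    intro f hf m u hu
    apply f.injective
    rw [hf _ u hu]
    simp

/-- Park's embedding of `M` into `Park(M, P)`, sending `m` to left translation by `m`. -/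
def parkEmbed (M : Type*) [Group M] (P : Subgroup M) : M →* ↥(parkGroup M P) where
  toFun m := ⟨Equiv.mulLeft m, fun x u _ => by simp [mul_assoc]⟩
  map_one' := by
    apply Subtype.ext
    ext x
    simp
  map_mul' m n := by
    apply Subtype.ext
    ext x
    simp [mul_assoc]

/-- `P` is a Sylow `p`-subgroup of a subgroup `H` of `G`. -/
def IsSylowIn (p : ℕ) {G : Type*} [Group G] (H P : Subgroup G) : Prop :=
  P ≤ H ∧ IsPGroup p P ∧ ∀ Q : Subgroup G, Q ≤ H → IsPGroup p Q → P ≤ Q → Q = P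

/-- let `M` be a finite group of order `3·2^n` (`n ≥ 3`) with no
non-trivial normal subgroup of odd order and with a non-normal Sylow `2`-subgroup
`P`, and let `G = Park(M, P)` with Park's embedding `ι`.  If `Q ≤ P` is contained
in the normal core of `P` in `M` and `C_M(Q)` is a `2`-group, then `C_G(ι(Q))` is
a `2`-group. -/
theorem statement16 (n : ℕ) (hn : 3 ≤ n)
    (M : Type*) [Group M] [Finite M] (hM : Nat.card M = 3 * 2 ^ n)
    (hodd : ∀ K : Subgroup M, K.Normal → Odd (Nat.card K) → K = ⊥)
    (P : Subgroup M) (hsyl : IsSylowIn 2 ⊤ P) (hPnn : ¬ P.Normal)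
    (Q : Subgroup M) (hQP : Q ≤ P) (hQ : Q ≤ P.normalCore)
    (hCMQ : IsPGroup 2 (Subgroup.centralizer (Q : Set M))) :
    IsPGroup 2 (Subgroup.centralizer
      ((Q.map (parkEmbed M P) : Subgroup ↥(parkGroup M P)) : Set ↥(parkGroup M P))) := by
  classical
  obtain ⟨-, hP2, hPmax⟩ := hsyl
  haveI : Fact (Nat.Prime 2) := ⟨Nat.prime_two⟩
  obtain ⟨S, hPS⟩ := hP2.exists_le_sylow
  have hSP : (S : Subgroup M) = P := hPmax S le_top S.isPGroup' hPS
  have hcardP : Nat.card P = 2 ^ n := by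
    have h1 := Sylow.card_eq_multiplicity S
    rw [hSP, hM] at h1
    have h2 : (Nat.factorization (3 * 2 ^ n)) 2 = n := by
      rw [Nat.factorization_mul (by norm_num) (by positivity)]
      simp [Nat.Prime.factorization_pow, Nat.factorization_eq_zero_of_not_dvd,
        Nat.Prime.factorization_self Nat.prime_two]
    rw [h1, h2]
  have hindex : P.index = 3 := by
    have h3 := Subgroup.index_mul_card P
    rw [hcardP, hM] at h3
    have h2 : 0 < 2 ^ n := by positivity
    exact Nat.eq_of_mul_eq_mul_right h2 h3
  have hcardX : Nat.card (M ⧸ P) = 3 := by rw [← hindex]; rfl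
  set C := Subgroup.centralizer (Q : Set M) with hCdef
  -- squares of elements of C act trivially on M ⧸ P
  have hsq : ∀ c ∈ C, ∀ y : M ⧸ P, c • c • y = y := by
    intro c hc y
    obtain ⟨k, hk⟩ := hCMQ ⟨c, hc⟩
    have hck : c ^ 2 ^ k = 1 := by
      have := congrArg Subtype.val hk
      simpa using this
    set π := MulAction.toPermHom M (M ⧸ P) c with hπ
    have hπk : π ^ 2 ^ k = 1 := by rw [hπ, ← map_pow, hck, map_one]
    have h6 : π ^ 6 = 1 := by
      have hc6 : Nat.card (Equiv.Perm (M ⧸ P)) = 6 := by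
        haveI : Fintype (M ⧸ P) := Fintype.ofFinite _
        rw [Nat.card_eq_fintype_card, Fintype.card_perm, ← Nat.card_eq_fintype_card, hcardX]
        rfl
      rw [← hc6]; exact pow_card_eq_one'
    have hdvd1 : orderOf π ∣ 2 ^ k := orderOf_dvd_of_pow_eq_one hπk
    have hdvd2 : orderOf π ∣ 6 := orderOf_dvd_of_pow_eq_one h6
    obtain ⟨j, hj, hje⟩ := (Nat.dvd_prime_pow Nat.prime_two).mp hdvd1
    have hj1 : orderOf π ∣ 2 := by
      match j, hje with
      | 0, hje => rw [hje]; norm_num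
      | 1, hje => rw [hje]; norm_num
      | (j+2), hje =>
        exfalso
        rw [hje] at hdvd2
        have h4 : (4:ℕ) ∣ 6 := dvd_trans ⟨2^j, by ring⟩ hdvd2
        norm_num at h4
    have hπ2 : π ^ 2 = 1 := orderOf_dvd_iff_pow_eq_one.mp hj1
    have := congrArg (fun e : Equiv.Perm (M ⧸ P) => e y) hπ2
    simpa [hπ, pow_succ, Equiv.Perm.mul_apply, MulAction.toPermHom_apply] using this
  -- key lemma: odd-order elements of the big centralizer are trivial
  have key : ∀ g : ↥(Subgroup.centralizer
      ((Q.map (parkEmbed M P) : Subgroup ↥(parkGroup M P)) : Set ↥(parkGroup M P))),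
      Odd (orderOf g) → g = 1 := by
    intro g hodd'
    set d := orderOf g with hd
    set f : Equiv.Perm M := ((g : ↥(parkGroup M P)) : Equiv.Perm M) with hf
    have hfP : ∀ m u : M, u ∈ P → f (m * u) = f m * u := (g : ↥(parkGroup M P)).2
    have hfQ : ∀ q, q ∈ Q → ∀ x : M, f (q * x) = q * f x := by
      intro q hq x
      have hmem : parkEmbed M P q ∈ Q.map (parkEmbed M P) := ⟨q, hq, rfl⟩
      have hcomm := (Subgroup.mem_centralizer_iff.mp g.2) _ hmem
      have := congrArg (fun z : ↥(parkGroup M P) => ((z : Equiv.Perm M)) x) hcomm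
      simpa [parkEmbed, Equiv.Perm.mul_apply, hf] using this.symm
    have hgd : g ^ d = 1 := pow_orderOf_eq_one g
    have hfd : ∀ x : M, (f ^ d) x = x := by
      intro x
      have hgd1 : (g : ↥(parkGroup M P)) ^ d = 1 := by
        exact_mod_cast congrArg Subtype.val hgd
      have h1 : f ^ d = 1 := by
        rw [hf]; exact_mod_cast congrArg Subtype.val hgd1
      rw [h1]; rfl
    have hcmem : ∀ x : M, f x * x⁻¹ ∈ C := by
      intro x
      rw [hCdef, Subgroup.mem_centralizer_iff]
      intro q hq
      have h1 : f (q * x) = q * f x := hfQ q hq x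
      have h2 : x⁻¹ * q * x ∈ P := by
        have h3 := hQ hq x⁻¹
        rwa [inv_inv] at h3
      have h3 : f (q * x) = f x * (x⁻¹ * q * x) := by
        have h4 : q * x = x * (x⁻¹ * q * x) := by group
        rw [h4, hfP x _ h2]
      have h5 : q * f x = f x * (x⁻¹ * q * x) := by rw [← h1, h3]
      calc q * (f x * x⁻¹) = (q * f x) * x⁻¹ := by group
        _ = (f x * (x⁻¹ * q * x)) * x⁻¹ := by rw [h5]
        _ = (f x * x⁻¹) * q := by group
    by_cases hall : ∀ x : M, ((f x : M) : M ⧸ P) = (x : M ⧸ P)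
    · -- f is the identity
      have hfx : ∀ x : M, f x = x := by
        intro x
        have hu : x⁻¹ * f x ∈ P := QuotientGroup.eq.mp (hall x).symm
        set u := x⁻¹ * f x with hu'
        have hxu : f x = x * u := by rw [hu']; group
        have hiter : ∀ j : ℕ, (f ^ j) x = x * u ^ j := by
          intro j; induction j with
          | zero => simp
          | succ j ih =>
            rw [pow_succ', Equiv.Perm.mul_apply, ih, hfP x _ (P.pow_mem hu j), hxu,
              pow_succ' u j, mul_assoc]
        have hud : u ^ d = 1 := by
          have := hfd x
          rw [hiter d] at this
          exact mul_left_cancel (by rw [this, mul_one])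
        obtain ⟨k, hk⟩ := hP2 ⟨u, hu⟩
        have huk : u ^ 2 ^ k = 1 := by
          have := congrArg Subtype.val hk
          simpa using this
        have h1 : orderOf u ∣ d := orderOf_dvd_of_pow_eq_one hud
        have h2 : orderOf u ∣ 2 ^ k := orderOf_dvd_of_pow_eq_one huk
        have hcop : Nat.Coprime d (2 ^ k) :=
          Nat.Coprime.pow_right _ (Nat.coprime_two_right.mpr hodd')
        have h3 : orderOf u ∣ Nat.gcd d (2 ^ k) := Nat.dvd_gcd h1 h2
        rw [hcop] at h3
        have h4 : u = 1 := orderOf_eq_one_iff.mp (Nat.dvd_one.mp h3)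
        rw [hxu, h4, mul_one]
      apply Subtype.ext; apply Subtype.ext; apply Equiv.ext
      intro x
      simpa using hfx x
    · push_neg at hall
      obtain ⟨x, hx⟩ := hall
      exfalso
      set m₁ := f x with hm₁
      set m₂ := f m₁ with hm₂
      set p₁ : M ⧸ P := (x : M ⧸ P) with hp₁
      set p₂ : M ⧸ P := (m₁ : M ⧸ P) with hp₂
      set p₃ : M ⧸ P := (m₂ : M ⧸ P) with hp₃
      have hne12 : p₁ ≠ p₂ := fun e => hx e.symm
      have hinj : ∀ a b : M, ((f a : M) : M ⧸ P) = ((f b : M) : M ⧸ P) →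
          (a : M ⧸ P) = (b : M ⧸ P) := by
        intro a b hab
        have hu : (f a)⁻¹ * f b ∈ P := QuotientGroup.eq.mp hab
        have h2 : f (a * ((f a)⁻¹ * f b)) = f b := by
          rw [hfP a _ hu]; group
        have h3 : a * ((f a)⁻¹ * f b) = b := f.injective h2
        rw [QuotientGroup.eq, ← h3]
        simpa using hu
      have hne23 : p₂ ≠ p₃ := fun e => hne12 (hinj x m₁ e)
      have hne13 : p₁ ≠ p₃ := by
        intro e
        have hu : x⁻¹ * m₂ ∈ P := QuotientGroup.eq.mp e
        set u := x⁻¹ * m₂ with hu'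
        have hm2u : m₂ = x * u := by rw [hu']; group
        have hiter : ∀ t : ℕ, (f ^ (2 * t)) x = x * u ^ t := by
          intro t; induction t with
          | zero => simp
          | succ t ih =>
            have h2 : 2 * (t + 1) = (2 * t) + 1 + 1 := by ring
            rw [h2, pow_succ', pow_succ', Equiv.Perm.mul_apply, Equiv.Perm.mul_apply, ih,
              hfP x _ (P.pow_mem hu t), ← hm₁, hfP m₁ _ (P.pow_mem hu t), ← hm₂, hm2u,
              pow_succ' u t, mul_assoc]
        obtain ⟨t, ht⟩ := hodd'
        have h5 : (f ^ d) x = m₁ * u ^ t := by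
          rw [hd] at ht ⊢
          rw [ht, pow_succ', Equiv.Perm.mul_apply, hiter t, hfP x _ (P.pow_mem hu t)]
        rw [hfd x] at h5
        have h6 : p₂ = p₁ := by
          rw [hp₁, hp₂, QuotientGroup.eq]
          rw [h5]
          simpa using P.pow_mem hu t
        exact hne12 h6.symm
      have hc1 : m₁ * x⁻¹ ∈ C := hcmem x
      have hc2 : m₂ * x⁻¹ ∈ C := by
        have h7 : m₂ * x⁻¹ = (m₂ * m₁⁻¹) * (m₁ * x⁻¹) := by group
        rw [h7]; exact C.mul_mem (hcmem m₁) (hcmem x)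
      have e1 : (m₁ * x⁻¹) • p₁ = p₂ := by
        rw [hp₁, hp₂, MulAction.Quotient.smul_mk]
        congr 1
        rw [smul_eq_mul]; group
      have e2 : (m₂ * x⁻¹) • p₁ = p₃ := by
        rw [hp₁, hp₃, MulAction.Quotient.smul_mk]
        congr 1
        rw [smul_eq_mul]; group
      set c₁ := m₁ * x⁻¹ with hc₁def
      set c₂ := m₂ * x⁻¹ with hc₂def
      have s1 := hsq c₁ hc1
      have s2 := hsq c₂ hc2
      have hc3 : c₂⁻¹ * c₁ ∈ C := C.mul_mem (C.inv_mem hc2) hc1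
      have s3 := hsq _ hc3
      haveI : Fintype (M ⧸ P) := Fintype.ofFinite _
      have huniv : ∀ y : M ⧸ P, y = p₁ ∨ y = p₂ ∨ y = p₃ := by
        intro y
        by_contra hcon
        push_neg at hcon
        have hcard4 : ({y, p₁, p₂, p₃} : Finset (M ⧸ P)).card = 4 := by
          rw [Finset.card_insert_of_notMem (by simp [hcon.1, hcon.2.1, hcon.2.2]),
            Finset.card_insert_of_notMem (by simp [hne12, hne13]),
            Finset.card_insert_of_notMem (by simp [hne23]), Finset.card_singleton]
        have hle : ({y, p₁, p₂, p₃} : Finset (M ⧸ P)).card ≤ Fintype.card (M ⧸ P) :=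
          Finset.card_le_univ _
        rw [hcard4, ← Nat.card_eq_fintype_card, hcardX] at hle
        omega
      have e1' : c₁ • p₂ = p₁ := by
        have := s1 p₁; rwa [e1] at this
      have e2' : c₂ • p₃ = p₁ := by
        have := s2 p₁; rwa [e2] at this
      have e2fix : c₂ • p₂ = p₂ := by
        rcases huniv (c₂ • p₂) with h | h | h
        · exfalso
          rw [← e2'] at h
          exact hne23 (smul_left_cancel c₂ h)
        · exact h
        · exfalso
          rw [← e2] at h
          exact hne12 (smul_left_cancel c₂ h).symm
      have t1 : (c₂⁻¹ * c₁) • p₁ = p₂ := by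
        rw [mul_smul, e1, inv_smul_eq_iff, e2fix]
      have t2 : (c₂⁻¹ * c₁) • p₂ = p₁ := by
        have := s3 p₁; rwa [t1] at this
      have t3 : (c₂⁻¹ * c₁) • p₃ = p₃ := by
        rcases huniv ((c₂⁻¹ * c₁) • p₃) with h | h | h
        · exfalso
          rw [← t2] at h
          exact hne23 (smul_left_cancel _ h).symm
        · exfalso
          rw [← t1] at h
          exact hne13 (smul_left_cancel _ h).symm
        · exact h
      rw [mul_smul, inv_smul_eq_iff] at t3
      have hfin : c₁ • p₃ = p₁ := by rw [t3, e2']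
      rw [← e1'] at hfin
      exact hne23 (smul_left_cancel _ hfin).symm
  -- conclude using the key lemma
  intro g
  have hdpos : orderOf g ≠ 0 := (orderOf_pos g).ne'
  refine ⟨(orderOf g).factorization 2, ?_⟩
  set k := (orderOf g).factorization 2 with hk
  have hdvd : 2 ^ k ∣ orderOf g := Nat.ordProj_dvd _ 2
  have hodd2 : Odd (orderOf (g ^ 2 ^ k)) := by
    rw [orderOf_pow, Nat.gcd_eq_right hdvd]
    rw [Nat.odd_iff]
    have h1 := Nat.not_dvd_ordCompl Nat.prime_two hdpos
    have h2 : ¬ 2 ∣ orderOf g / 2 ^ k := h1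
    omega
  exact key (g ^ 2 ^ k) hodd2
end
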